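/- Let (X, 𝒜, μ) be a σ-finite measure space, let k : X → ℝ be measurable, let m ≤ M be real numbers with m ≤ k(x) ≤ M for μ-a.e. x ∈ X, and let g : X → ℝ be μ-integrable. Then ∫_X k(x) g(x) dμ(x) = M ∫_X g(x) dμ(x) − ∫_m^M ( ∫_{{x ∈ X : k(x) ≤ y}} g(x) dμ(x) ) dy, where the outer integral on the right is the Lebesgue integral over the interval [m, M]. -/

import Mathlib

open MeasureTheory

/-- Layer-cake identity (C2): for a measurable weight `k` with `m ≤ k ≤ M` a.e.
and an integrable `g`,
`∫ k g dμ = M ∫ g dμ − ∫_{m}^{M} (∫_{{k ≤ y}} g dμ) dy`. -/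
theorem layer_cake_sublevel
    {X : Type*} [MeasurableSpace X] (μ : Measure X) [SigmaFinite μ]
    (k : X → ℝ) (hk : Measurable k)
    (m M : ℝ) (hmM : m ≤ M)
    (hbd : ∀ᵐ x ∂μ, m ≤ k x ∧ k x ≤ M)
    (g : X → ℝ) (hg : Integrable g μ) :
    ∫ x, k x * g x ∂μ
      = M * ∫ x, g x ∂μ
        - ∫ y in m..M, (∫ x in {x | k x ≤ y}, g x ∂μ) := by
  set ν : Measure ℝ := volume.restrict (Set.Ioc m M) with hν
  have hSprod : MeasurableSet {p : ℝ × X | k p.2 ≤ p.1} :=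
    measurableSet_le (hk.comp measurable_snd) measurable_fst
  -- integrability of k * g
  have hkg : Integrable (fun x => k x * g x) μ := by
    refine Integrable.mono' (hg.norm.const_mul (max |m| |M|))
      (hk.aestronglyMeasurable.mul hg.1) ?_
    filter_upwards [hbd] with x hx
    rw [norm_mul]
    have hkx : |k x| ≤ max |m| |M| := by
      rcases hx with ⟨h1, h2⟩
      rcases abs_le.mp (le_refl |m|) with _;
      refine abs_le.mpr ⟨?_, ?_⟩
      · calc -(max |m| |M|) ≤ -|m| := neg_le_neg (le_max_left _ _)
          _ ≤ m := neg_abs_le m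
          _ ≤ k x := h1
      · calc k x ≤ M := h2
          _ ≤ |M| := le_abs_self M
          _ ≤ max |m| |M| := le_max_right _ _
    have := mul_le_mul_of_nonneg_right hkx (norm_nonneg (g x))
    simpa [Real.norm_eq_abs] using this
  -- the product function
  have hFaesm : AEStronglyMeasurable
      (Function.uncurry fun y x => ({x | k x ≤ y}.indicator g x)) (ν.prod μ) := by
    have : (Function.uncurry fun y x => ({x | k x ≤ y}.indicator g x))
        = {p : ℝ × X | k p.2 ≤ p.1}.indicator (fun p => g p.2) := by
      ext p
      by_cases h : k p.2 ≤ p.1 <;>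
        simp [Function.uncurry, Set.indicator, h]
    rw [this]
    exact (hg.1.comp_snd).indicator hSprod
  have hgsnd : Integrable (fun p : ℝ × X => g p.2) (ν.prod μ) := by
    have := (integrable_const (μ := ν) (1 : ℝ)).mul_prod hg
    simpa using this
  have hF : Integrable
      (Function.uncurry fun y x => ({x | k x ≤ y}.indicator g x)) (ν.prod μ) := by
    refine Integrable.mono' hgsnd.norm hFaesm ?_
    filter_upwards with p
    simpa [Function.uncurry] using norm_indicator_le_norm_self (s := {x | k x ≤ p.1}) g p.2
  have swap := integral_integral_swap hF
  -- left side of swap equals the interval integral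
  have hleft : (∫ y, ∫ x, ({x | k x ≤ y}.indicator g x) ∂μ ∂ν)
      = ∫ y in m..M, (∫ x in {x | k x ≤ y}, g x ∂μ) := by
    rw [intervalIntegral.integral_of_le hmM]
    refine integral_congr_ae (Filter.Eventually.of_forall fun y => ?_)
    exact integral_indicator (hk measurableSet_Iic)
  -- right side of swap: inner integral over y
  have hright : (∫ x, ∫ y, ({x | k x ≤ y}.indicator g x) ∂ν ∂μ)
      = ∫ x, (M - k x) * g x ∂μ := by
    refine integral_congr_ae ?_
    filter_upwards [hbd] with x ⟨h1, h2⟩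
    have hfun : (fun y => ({x | k x ≤ y}.indicator g x))
        = (Set.Ici (k x)).indicator (fun _ => g x) := by
      ext y
      by_cases h : k x ≤ y <;> simp [Set.indicator, h]
    rw [hfun, integral_indicator measurableSet_Ici, hν,
      Measure.restrict_restrict measurableSet_Ici, setIntegral_const]
    have hmeas : volume (Set.Ici (k x) ∩ Set.Ioc m M) = ENNReal.ofReal (M - k x) := by
      apply le_antisymm
      · calc volume (Set.Ici (k x) ∩ Set.Ioc m M)
            ≤ volume (Set.Icc (k x) M) := by
              apply measure_mono
              rintro y ⟨hy1, _, hy3⟩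
              exact ⟨hy1, hy3⟩
          _ = ENNReal.ofReal (M - k x) := Real.volume_Icc
      · calc ENNReal.ofReal (M - k x) = volume (Set.Ioc (k x) M) := Real.volume_Ioc.symm
          _ ≤ volume (Set.Ici (k x) ∩ Set.Ioc m M) := by
              apply measure_mono
              rintro y ⟨hy1, hy2⟩
              exact ⟨le_of_lt hy1, lt_of_le_of_lt h1 hy1, hy2⟩
    rw [measureReal_def, hmeas, ENNReal.toReal_ofReal (by linarith)]
    simp [smul_eq_mul]
  have hsplit : ∫ x, (M - k x) * g x ∂μ = M * ∫ x, g x ∂μ - ∫ x, k x * g x ∂μ := by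
    have : ∀ x, (M - k x) * g x = M * g x - k x * g x := fun x => by ring
    simp_rw [this]
    rw [integral_sub (hg.const_mul M) hkg, integral_const_mul]
  rw [← hleft, swap, hright, hsplit]
  ring
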